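/- For 0 < s < 1, the ratio of the complete elliptic integrals of the first and second kind satisfies 1/(1 - s/2) < K(s)/E(s) < (1 - s/2)/(1 - s). -/

import Mathlib

open Real Filter Topology Set

/-- Complete elliptic integral of the first kind (parameter = modulus squared). -/
noncomputable def Kel (s : ℝ) : ℝ :=
  ∫ θ in (0:ℝ)..(π / 2), 1 / Real.sqrt (1 - s * Real.sin θ ^ 2)

/-- Complete elliptic integral of the second kind (parameter = modulus squared). -/
noncomputable def Eel (s : ℝ) : ℝ :=
  ∫ θ in (0:ℝ)..(π / 2), Real.sqrt (1 - s * Real.sin θ ^ 2)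

namespace KEaux

lemma isin2 : ∫ θ in (0:ℝ)..(π/2), sin θ^2 = π/4 := by
  rw [integral_sin_sq]; simp; ring

lemma isin4 : ∫ θ in (0:ℝ)..(π/2), sin θ^4 = 3*π/16 := by
  have h := integral_sin_pow (a := 0) (b := π/2) 2
  norm_num [isin2] at h
  linarith

lemma isin6 : ∫ θ in (0:ℝ)..(π/2), sin θ^6 = 5*π/32 := by
  have h := integral_sin_pow (a := 0) (b := π/2) 4
  norm_num [isin4] at h
  linarith

lemma ipoly (a b c d : ℝ) :
    ∫ θ in (0:ℝ)..(π/2), (a + b * sin θ^2 + c * sin θ^4 + d * sin θ^6)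
      = a*(π/2) + b*(π/4) + c*(3*π/16) + d*(5*π/32) := by
  have i1 : IntervalIntegrable (fun θ:ℝ => a + b * sin θ^2) MeasureTheory.volume 0 (π/2) := by
    apply Continuous.intervalIntegrable; fun_prop
  have i2 : IntervalIntegrable (fun θ:ℝ => c * sin θ^4) MeasureTheory.volume 0 (π/2) := by
    apply Continuous.intervalIntegrable; fun_prop
  have i12 : IntervalIntegrable (fun θ:ℝ => a + b * sin θ^2 + c * sin θ^4)
      MeasureTheory.volume 0 (π/2) := by
    apply Continuous.intervalIntegrable; fun_prop
  have i3 : IntervalIntegrable (fun θ:ℝ => d * sin θ^6) MeasureTheory.volume 0 (π/2) := by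
    apply Continuous.intervalIntegrable; fun_prop
  have ia : IntervalIntegrable (fun _:ℝ => a) MeasureTheory.volume 0 (π/2) :=
    intervalIntegrable_const
  have ib : IntervalIntegrable (fun θ:ℝ => b * sin θ^2) MeasureTheory.volume 0 (π/2) := by
    apply Continuous.intervalIntegrable; fun_prop
  rw [intervalIntegral.integral_add i12 i3, intervalIntegral.integral_add i1 i2,
    intervalIntegral.integral_add ia ib, intervalIntegral.integral_const,
    intervalIntegral.integral_const_mul, intervalIntegral.integral_const_mul,
    intervalIntegral.integral_const_mul, isin2, isin4, isin6]
  simp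
  ring

lemma pt1 {x : ℝ} (h0 : 0 ≤ x) (h1 : x < 1) :
    1 + x/2 + 3*x^2/8 ≤ 1 / Real.sqrt (1-x) := by
  have hy : 0 < Real.sqrt (1-x) := Real.sqrt_pos.2 (by linarith)
  rw [le_div_iff₀ hy]
  have hy2 : Real.sqrt (1-x) ^ 2 = 1-x := Real.sq_sqrt (by linarith)
  set y := Real.sqrt (1-x) with hydef
  have h2 : ((1 + x/2 + 3*x^2/8) * y)^2 ≤ 1 := by
    rw [mul_pow, hy2]
    nlinarith [sq_nonneg x, pow_nonneg h0 3, pow_nonneg h0 4, pow_nonneg h0 5]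
  nlinarith [mul_nonneg (by nlinarith : (0:ℝ) ≤ 1 + x/2 + 3*x^2/8) hy.le]

lemma pt2 {x : ℝ} (h0 : 0 ≤ x) (h1 : x ≤ 1) :
    Real.sqrt (1-x) ≤ 1 - x/2 - x^2/8 - x^3/16 := by
  have hq0 : (0:ℝ) ≤ 1 - x/2 - x^2/8 - x^3/16 := by nlinarith [sq_nonneg x, pow_nonneg h0 3]
  have h2 : 1 - x ≤ (1 - x/2 - x^2/8 - x^3/16)^2 := by
    nlinarith [pow_nonneg h0 4, pow_nonneg h0 5, pow_nonneg h0 6]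
  calc Real.sqrt (1-x) ≤ Real.sqrt ((1 - x/2 - x^2/8 - x^3/16)^2) := Real.sqrt_le_sqrt h2
    _ = 1 - x/2 - x^2/8 - x^3/16 := Real.sqrt_sq hq0

lemma pt3 {x : ℝ} (h0 : 0 ≤ x) (h1 : x ≤ 1) : 1 - x ≤ Real.sqrt (1-x) := by
  calc (1:ℝ) - x = Real.sqrt ((1-x)^2) := (Real.sqrt_sq (by linarith)).symm
    _ ≤ Real.sqrt (1-x) := Real.sqrt_le_sqrt (by nlinarith)

end KEaux

set_option maxHeartbeats 1000000 in
open KEaux MeasureTheory in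
/-- For `0 < s < 1`, `1/(1 - s/2) < K(s)/E(s) < (1 - s/2)/(1 - s)`. -/
theorem KE_ratio_bounds (s : ℝ) (hs0 : 0 < s) (hs1 : s < 1) :
    1 / (1 - s / 2) < Kel s / Eel s ∧ Kel s / Eel s < (1 - s / 2) / (1 - s) := by
  have hπ : (0:ℝ) < π := pi_pos
  have hab : (0:ℝ) ≤ π/2 := by linarith
  -- basic facts about the integrand
  have hsin : ∀ θ:ℝ, Real.sin θ ^ 2 ≤ 1 := fun θ => sin_sq_le_one θ
  have hx0 : ∀ θ:ℝ, 0 ≤ s * sin θ^2 := fun θ => mul_nonneg hs0.le (sq_nonneg _)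
  have hx1 : ∀ θ:ℝ, s * sin θ^2 < 1 := fun θ =>
    lt_of_le_of_lt (by nlinarith [hsin θ]) hs1
  have hgpos : ∀ θ:ℝ, 0 < 1 - s * sin θ^2 := fun θ => by have := hx1 θ; linarith
  have hgc : Continuous (fun θ:ℝ => 1 - s * sin θ^2) := by fun_prop
  have hFc : Continuous (fun θ:ℝ => Real.sqrt (1 - s * sin θ^2)) := hgc.sqrt
  have hFpos : ∀ θ:ℝ, 0 < Real.sqrt (1 - s * sin θ^2) := fun θ => Real.sqrt_pos.2 (hgpos θ)
  have hFinvc : Continuous (fun θ:ℝ => 1 / Real.sqrt (1 - s * sin θ^2)) :=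
    continuous_const.div hFc (fun θ => (hFpos θ).ne')
  have hginvc : Continuous (fun θ:ℝ => 1 / (1 - s * sin θ^2)) :=
    continuous_const.div hgc (fun θ => (hgpos θ).ne')
  have hFint : IntervalIntegrable (fun θ:ℝ => Real.sqrt (1 - s * sin θ^2)) volume 0 (π/2) :=
    hFc.intervalIntegrable 0 (π/2)
  have hFinvint : IntervalIntegrable (fun θ:ℝ => 1 / Real.sqrt (1 - s * sin θ^2)) volume 0 (π/2) :=
    hFinvc.intervalIntegrable 0 (π/2)
  have hginvint : IntervalIntegrable (fun θ:ℝ => 1 / (1 - s * sin θ^2)) volume 0 (π/2) :=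
    hginvc.intervalIntegrable 0 (π/2)
  have hpolyint : ∀ a b c d : ℝ, IntervalIntegrable
      (fun θ:ℝ => a + b * sin θ^2 + c * sin θ^4 + d * sin θ^6) volume 0 (π/2) := by
    intro a b c d; apply Continuous.intervalIntegrable; fun_prop
  -- lower bound for K
  have hKlow : π/2 + s*(π/8) + s^2*(9*π/128) ≤ Kel s := by
    have hmono := intervalIntegral.integral_mono_on hab (hpolyint 1 (s/2) (3*s^2/8) 0)
      hFinvint (fun θ _ => by
        have h := pt1 (hx0 θ) (hx1 θ)
        calc 1 + (s/2) * sin θ^2 + (3*s^2/8) * sin θ^4 + 0 * sin θ^6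
            = 1 + (s * sin θ^2)/2 + 3*(s * sin θ^2)^2/8 := by ring
          _ ≤ 1 / Real.sqrt (1 - s * sin θ^2) := h)
    rw [ipoly] at hmono
    unfold Kel
    linarith
  -- upper bound for E
  have hEup : Eel s ≤ π/2 - s*(π/8) - s^2*(3*π/128) - s^3*(5*π/512) := by
    have hmono := intervalIntegral.integral_mono_on hab hFint
      (hpolyint 1 (-(s/2)) (-(s^2/8)) (-(s^3/16))) (fun θ _ => by
        have h := pt2 (hx0 θ) (hx1 θ).le
        calc Real.sqrt (1 - s * sin θ^2)
            ≤ 1 - (s * sin θ^2)/2 - (s * sin θ^2)^2/8 - (s * sin θ^2)^3/16 := h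
          _ = 1 + (-(s/2)) * sin θ^2 + (-(s^2/8)) * sin θ^4 + (-(s^3/16)) * sin θ^6 := by ring)
    rw [ipoly] at hmono
    unfold Eel
    linarith
  -- positivity of E and K
  have hEpos : (π/2) * (1 - s/2) ≤ Eel s := by
    have hmono := intervalIntegral.integral_mono_on hab (hpolyint 1 (-s) 0 0) hFint
      (fun θ _ => by
        have h := pt3 (hx0 θ) (hx1 θ).le
        calc 1 + (-s) * sin θ^2 + 0 * sin θ^4 + 0 * sin θ^6 = 1 - s * sin θ^2 := by ring
          _ ≤ Real.sqrt (1 - s * sin θ^2) := h)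
    rw [ipoly] at hmono
    unfold Eel
    nlinarith
  have hE0 : 0 < Eel s := lt_of_lt_of_le (by nlinarith) hEpos
  have hK0 : 0 < Kel s := by
    have : π/2 + s*(π/8) + s^2*(9*π/128) > 0 := by positivity
    linarith
  -- J = ∫ 1/(1 - s sin²) and its strict upper bound
  set J : ℝ := ∫ θ in (0:ℝ)..(π/2), 1 / (1 - s * sin θ^2) with hJdef
  have hJpos : 0 < J := by
    apply intervalIntegral.intervalIntegral_pos_of_pos hginvint
      (fun θ => by have := hgpos θ; positivity)
    linarith
  have hJlt : J < (π/2) * ((1 - s/2)/(1 - s)) := by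
    have hs' : (0:ℝ) < 1 - s := by linarith
    have key : J < ∫ θ in (0:ℝ)..(π/2), (1 + (s/(1-s)) * sin θ^2 + 0 * sin θ^4 + 0 * sin θ^6) := by
      apply intervalIntegral.integral_lt_integral_of_continuousOn_of_le_of_exists_lt
        (by linarith) hginvc.continuousOn (by fun_prop)
      · intro θ _
        rw [div_le_iff₀ (hgpos θ)]
        have h1 := hsin θ
        have h2 := sq_nonneg (sin θ)
        have key : (1 + (s/(1-s)) * sin θ^2 + 0 * sin θ^4 + 0 * sin θ^6) * (1 - s * sin θ^2)
            = 1 + s^2 * sin θ^2 * (1 - sin θ^2) / (1-s) := by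
          field_simp
          ring
        rw [key]
        have h3 : 0 ≤ 1 - sin θ^2 := by nlinarith [hsin θ]
        have : 0 ≤ s^2 * sin θ^2 * (1 - sin θ^2) / (1-s) :=
          div_nonneg (mul_nonneg (mul_nonneg (sq_nonneg s) (sq_nonneg _)) h3) hs'.le
        linarith
      · refine ⟨π/4, ⟨by linarith, by linarith⟩, ?_⟩
        have h4 : Real.sin (π/4) ^ 2 = 1/2 := by
          rw [sin_pi_div_four]
          rw [div_pow, sq_sqrt (by norm_num : (2:ℝ) ≥ 0)]
          norm_num
        rw [zero_mul, zero_mul, add_zero, add_zero, h4]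
        rw [div_lt_iff₀ (by nlinarith : (0:ℝ) < 1 - s * (1/2))]
        have key : (1 + s/(1-s) * (1/2)) * (1 - s * (1/2))
            = 1 + s^2/(4*(1-s)) := by field_simp; ring
        rw [key]
        have : 0 < s^2/(4*(1-s)) := by positivity
        linarith
    rw [ipoly] at key
    calc J < 1*(π/2) + (s/(1-s))*(π/4) + 0*(3*π/16) + 0*(5*π/32) := key
      _ = (π/2) * ((1 - s/2)/(1 - s)) := by field_simp; ring
  -- Cauchy-Schwarz (via AM-GM): (π/2)^2 ≤ K * E
  have hKE : (π/2)^2 ≤ Kel s * Eel s := by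
    set μ : ℝ := Real.sqrt (Kel s / Eel s) with hμdef
    have hμ : 0 < μ := Real.sqrt_pos.2 (div_pos hK0 hE0)
    have hμ2 : μ^2 = Kel s / Eel s := Real.sq_sqrt (div_nonneg hK0.le hE0.le)
    have hμ2' : μ^2 * Eel s = Kel s := by
      rw [hμ2]; field_simp
    have hint : π ≤ μ * Eel s + (1/μ) * Kel s := by
      have h0 : (∫ _ in (0:ℝ)..(π/2), (2:ℝ)) = π := by
        rw [intervalIntegral.integral_const, smul_eq_mul]; ring
      have hmono : (∫ _ in (0:ℝ)..(π/2), (2:ℝ)) ≤ ∫ θ in (0:ℝ)..(π/2), (μ * Real.sqrt (1 - s * sin θ^2) + 1/μ * (1 / Real.sqrt (1 - s * sin θ^2))) := intervalIntegral.integral_mono_on hab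
        ((intervalIntegrable_const : IntervalIntegrable (fun _ => (2:ℝ)) MeasureTheory.volume 0 (π/2)))
        (((continuous_const.mul hFc).add (continuous_const.mul hFinvc)).intervalIntegrable 0 (π/2))
        (fun θ _ => by
          have ha := hFpos θ
          show (2:ℝ) ≤ μ * Real.sqrt (1 - s * sin θ^2) + 1/μ * (1 / Real.sqrt (1 - s * sin θ^2))
          set a := Real.sqrt (1 - s * sin θ^2) with hadef
          rw [← sub_nonneg]
          have expand : μ * a + 1/μ * (1/a) - 2 = (μ*a - 1)^2/(μ*a) := by
            field_simp; ring
          rw [expand]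
          positivity)
      rw [intervalIntegral.integral_add (hFint.const_mul μ)
          (hFinvint.const_mul (1/μ)),
        intervalIntegral.integral_const_mul, intervalIntegral.integral_const_mul, h0] at hmono
      unfold Kel Eel
      exact hmono
    have h2 : π ≤ 2 * (μ * Eel s) := by
      have : (1/μ) * Kel s = μ * Eel s := by
        rw [← hμ2']; field_simp
      linarith [hint, this]
    nlinarith [h2, hμ2', mul_pos hμ hE0]
  -- K^2 ≤ (π/2) * J
  have hK2 : Kel s ^ 2 ≤ (π/2) * J := by
    set ν : ℝ := Real.sqrt (J / (π/2)) with hνdef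
    have hν : 0 < ν := Real.sqrt_pos.2 (div_pos hJpos (by linarith))
    have hν2 : ν^2 = J / (π/2) := Real.sq_sqrt (div_nonneg hJpos.le (by linarith))
    have hν2' : ν^2 * (π/2) = J := by rw [hν2]; field_simp
    have hint : 2 * Kel s ≤ ν * (π/2) + (1/ν) * J := by
      have if1 : IntervalIntegrable (fun θ:ℝ => 2 * (1 / Real.sqrt (1 - s * sin θ^2)))
          volume 0 (π/2) := (continuous_const.mul hFinvc).intervalIntegrable 0 (π/2)
      have ig1 : IntervalIntegrable (fun θ:ℝ => ν + (1/ν) * (1 / (1 - s * sin θ^2)))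
          volume 0 (π/2) := (continuous_const.add (continuous_const.mul hginvc)).intervalIntegrable 0 (π/2)
      have hmono := intervalIntegral.integral_mono_on hab if1 ig1
        (fun θ _ => by
          have ha := hFpos θ
          have hsq : Real.sqrt (1 - s * sin θ^2) ^ 2 = 1 - s * sin θ^2 :=
            Real.sq_sqrt (hgpos θ).le
          have key : 0 ≤ (1 / Real.sqrt (1 - s * sin θ^2) - ν)^2 := sq_nonneg _
          have hinv2 : (1 / Real.sqrt (1 - s * sin θ^2))^2 = 1 / (1 - s * sin θ^2) := by
            rw [div_pow, hsq]; norm_num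
          show 2 * (1 / Real.sqrt (1 - s * sin θ^2)) ≤ ν + (1/ν) * (1 / (1 - s * sin θ^2))
          rw [← hinv2]
          set a := 1 / Real.sqrt (1 - s * sin θ^2)
          have ha' : 0 < a := by positivity
          rw [(by ring : (1:ℝ)/ν * a^2 = a^2/ν), ← sub_nonneg]
          have expand : ν + a^2/ν - 2*a = (a - ν)^2/ν := by field_simp; ring
          rw [expand]
          positivity)
      rw [intervalIntegral.integral_const_mul,
        intervalIntegral.integral_add intervalIntegrable_const
          (hginvint.const_mul (1/ν)),
        intervalIntegral.integral_const, intervalIntegral.integral_const_mul] at hmono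
      rw [← hJdef] at hmono
      have hsmul : (π/2 - 0) • ν = ν * (π/2) := by rw [smul_eq_mul]; ring
      rw [hsmul] at hmono
      unfold Kel
      exact hmono
    have hKν : Kel s ≤ ν * (π/2) := by
      have : (1/ν) * J = ν * (π/2) := by rw [← hν2']; field_simp
      linarith
    calc Kel s ^2 ≤ (ν * (π/2))^2 := by nlinarith [hK0]
      _ = ν^2 * (π/2) * (π/2) := by ring
      _ = (π/2) * J := by rw [hν2']; ring
  constructor
  · -- lower bound
    rw [div_lt_div_iff₀ (by linarith : (0:ℝ) < 1 - s/2) hE0]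
    have key : π/2 - s*(π/8) - s^2*(3*π/128) - s^3*(5*π/512)
        < (π/2 + s*(π/8) + s^2*(9*π/128)) * (1 - s/2) := by
      nlinarith [mul_pos (mul_pos hπ (mul_pos hs0 hs0)) (show (0:ℝ) < 16 - 13*s by linarith)]
    have h2 : (π/2 + s*(π/8) + s^2*(9*π/128)) * (1 - s/2) ≤ Kel s * (1 - s/2) :=
      mul_le_mul_of_nonneg_right hKlow (by linarith)
    nlinarith [hEup]
  · -- upper bound
    have h1 : Kel s ^ 2 < (π/2)^2 * ((1 - s/2)/(1 - s)) := by
      calc Kel s ^2 ≤ (π/2) * J := hK2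
        _ < (π/2) * ((π/2) * ((1 - s/2)/(1 - s))) :=
          mul_lt_mul_of_pos_left hJlt (by linarith)
        _ = (π/2)^2 * ((1 - s/2)/(1 - s)) := by ring
    have h2 : Kel s / Eel s ≤ Kel s ^2 / (π/2)^2 := by
      rw [div_le_div_iff₀ hE0 (by positivity)]
      calc Kel s * (π/2)^2 ≤ Kel s * (Kel s * Eel s) :=
        mul_le_mul_of_nonneg_left hKE hK0.le
        _ = Kel s ^2 * Eel s := by ring
    calc Kel s / Eel s ≤ Kel s ^2 / (π/2)^2 := h2
      _ < (1 - s/2)/(1 - s) := by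
          rw [div_lt_iff₀ (by positivity)]
          linarith [h1]
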